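/- The comultiplication maps Δ_{μν}^υ on the algebras U_q(μ,ν) are coassociative: for all real μ, ν, υ, ρ, one has (Δ_{μυ}^ρ ⊗ id) ∘ Δ_{μν}^υ = (id ⊗ Δ_{ρν}^υ) ∘ Δ_{μν}^ρ as maps U_q(μ,ν) → U_q(μ,ρ) ⊗ U_q(ρ,υ) ⊗ U_q(υ,ν). -/

import Mathlib

open TensorProduct

/-- The defining relations of the algebra `U_q(μ,ν)` for a quadruple of elements. -/
def UqRel (q μ ν : ℝ) {A : Type} [Ring A] [Algebra ℂ A]
    (K Ki E F : A) : Prop :=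
  Ki * K = 1 ∧ K * Ki = 1 ∧
  K * E = (q : ℂ) • (E * K) ∧ K * F = ((q : ℂ))⁻¹ • (F * K) ∧
  E * F - F * E = (((q - q⁻¹)⁻¹ : ℝ) : ℂ) • ((μ : ℂ) • (K * K) - (ν : ℂ) • (Ki * Ki))

/-- `A` with its distinguished generators is a model of the universal algebra `U_q(μ,ν)`. -/
def IsUniversalUq (q μ ν : ℝ) (A : Type) [Ring A] [Algebra ℂ A]
    (K Ki E F : A) : Prop :=
  UqRel q μ ν K Ki E F ∧
  ∀ (B : Type) (_ : Ring B) (_ : Algebra ℂ B) (K' Ki' E' F' : B),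
    UqRel q μ ν K' Ki' E' F' →
    ∃! f : A →ₐ[ℂ] B, f K = K' ∧ f Ki = Ki' ∧ f E = E' ∧ f F = F'

lemma UqRel.mul_Ki_E {q μ ν : ℝ} {A : Type} [Ring A] [Algebra ℂ A]
    {K Ki E F : A} (h : UqRel q μ ν K Ki E F) :
    E * Ki = (q : ℂ) • (Ki * E) := by
  obtain ⟨hik, hki, hke, -, -⟩ := h
  have h := congrArg (fun x => Ki * x * Ki) hke
  simp only [mul_smul_comm, smul_mul_assoc, ← mul_assoc, hik, one_mul] at h
  rw [h, mul_assoc, hki, mul_one]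

lemma UqRel.mul_Ki_F {q μ ν : ℝ} {A : Type} [Ring A] [Algebra ℂ A]
    {K Ki E F : A} (h : UqRel q μ ν K Ki E F) :
    F * Ki = ((q : ℂ))⁻¹ • (Ki * F) := by
  obtain ⟨hik, hki, -, hkf, -⟩ := h
  have h := congrArg (fun x => Ki * x * Ki) hkf
  simp only [mul_smul_comm, smul_mul_assoc, ← mul_assoc, hik, one_mul] at h
  rw [h, mul_assoc, hki, mul_one]

lemma UqRel.tmul {q μ υ ν : ℝ} (hq : (q:ℂ) ≠ 0)
    {A B : Type} [Ring A] [Algebra ℂ A] [Ring B] [Algebra ℂ B]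
    {K Ki E F : A} {K' Ki' E' F' : B}
    (hA : UqRel q μ υ K Ki E F) (hB : UqRel q υ ν K' Ki' E' F') :
    UqRel q μ ν (K ⊗ₜ[ℂ] K') (Ki ⊗ₜ Ki') (E ⊗ₜ K' + Ki ⊗ₜ E') (F ⊗ₜ K' + Ki ⊗ₜ F') := by
  have heki := hA.mul_Ki_E
  have hfki := hA.mul_Ki_F
  have heki' := hB.mul_Ki_E
  have hfki' := hB.mul_Ki_F
  obtain ⟨hik, hki, hke, hkf, hef⟩ := hA
  obtain ⟨hik', hki', hke', hkf', hef'⟩ := hB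
  have hqq : (q:ℂ) * (q:ℂ)⁻¹ = 1 := mul_inv_cancel₀ hq
  have hqq' : (q:ℂ)⁻¹ * (q:ℂ) = 1 := inv_mul_cancel₀ hq
  refine ⟨?_, ?_, ?_, ?_, ?_⟩
  · simp [Algebra.TensorProduct.tmul_mul_tmul, hik, hik', Algebra.TensorProduct.one_def]
  · simp [Algebra.TensorProduct.tmul_mul_tmul, hki, hki', Algebra.TensorProduct.one_def]
  · simp only [mul_add, add_mul, Algebra.TensorProduct.tmul_mul_tmul, hke, hke', hki, hki', hik,
      smul_tmul', tmul_smul, smul_add]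
  · simp only [mul_add, add_mul, Algebra.TensorProduct.tmul_mul_tmul, hkf, hkf', hki, hki', hik,
      smul_tmul', tmul_smul, smul_add]
  · have hEF : E * F = F * E + (((q - q⁻¹)⁻¹ : ℝ) : ℂ) • ((μ : ℂ) • (K * K) - (υ : ℂ) • (Ki * Ki)) := by
      rw [← hef]; abel
    have hEF' : E' * F' = F' * E' + (((q - q⁻¹)⁻¹ : ℝ) : ℂ) • ((υ : ℂ) • (K' * K') - (ν : ℂ) • (Ki' * Ki')) := by
      rw [← hef']; abel
    simp only [mul_add, add_mul, Algebra.TensorProduct.tmul_mul_tmul, hEF, hEF',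
      heki, hfki, heki', hfki', smul_tmul', tmul_smul, smul_smul, hqq, hqq', one_smul,
      smul_sub, smul_add, tmul_add, tmul_sub, add_tmul, sub_tmul]
    simp only [hkf', hke', tmul_smul, smul_tmul', smul_smul, hqq, hqq', one_smul]
    abel

/-- Coassociativity of the comultiplications `Δ_{μν}^υ` of the `U_q(μ,ν)`:
`(Δ_{μυ}^ρ ⊗ id) ∘ Δ_{μν}^υ = (id ⊗ Δ_{ρν}^υ) ∘ Δ_{μν}^ρ` (after the canonical
associativity identification of triple tensor products). -/
theorem comultiplication_coassoc (q μ ν υ ρ : ℝ) (hq0 : 0 < q) (hq1 : q < 1)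
    {Uμν Uμυ Uυν Uμρ Uρυ Uρν : Type}
    [Ring Uμν] [Algebra ℂ Uμν] [Ring Uμυ] [Algebra ℂ Uμυ] [Ring Uυν] [Algebra ℂ Uυν]
    [Ring Uμρ] [Algebra ℂ Uμρ] [Ring Uρυ] [Algebra ℂ Uρυ] [Ring Uρν] [Algebra ℂ Uρν]
    (K1 Ki1 E1 F1 : Uμν) (K2 Ki2 E2 F2 : Uμυ) (K3 Ki3 E3 F3 : Uυν)
    (K4 Ki4 E4 F4 : Uμρ) (K5 Ki5 E5 F5 : Uρυ) (K6 Ki6 E6 F6 : Uρν)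
    (h1 : IsUniversalUq q μ ν Uμν K1 Ki1 E1 F1)
    (h2 : UqRel q μ υ K2 Ki2 E2 F2) (h3 : UqRel q υ ν K3 Ki3 E3 F3)
    (h4 : UqRel q μ ρ K4 Ki4 E4 F4) (h5 : UqRel q ρ υ K5 Ki5 E5 F5)
    (h6 : UqRel q ρ ν K6 Ki6 E6 F6)
    -- Δ_{μν}^υ
    (D1 : Uμν →ₐ[ℂ] Uμυ ⊗[ℂ] Uυν)
    (hD1K : D1 K1 = K2 ⊗ₜ K3) (hD1Ki : D1 Ki1 = Ki2 ⊗ₜ Ki3)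
    (hD1E : D1 E1 = E2 ⊗ₜ K3 + Ki2 ⊗ₜ E3) (hD1F : D1 F1 = F2 ⊗ₜ K3 + Ki2 ⊗ₜ F3)
    -- Δ_{μυ}^ρ
    (D2 : Uμυ →ₐ[ℂ] Uμρ ⊗[ℂ] Uρυ)
    (hD2K : D2 K2 = K4 ⊗ₜ K5) (hD2Ki : D2 Ki2 = Ki4 ⊗ₜ Ki5)
    (hD2E : D2 E2 = E4 ⊗ₜ K5 + Ki4 ⊗ₜ E5) (hD2F : D2 F2 = F4 ⊗ₜ K5 + Ki4 ⊗ₜ F5)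
    -- Δ_{μν}^ρ
    (D3 : Uμν →ₐ[ℂ] Uμρ ⊗[ℂ] Uρν)
    (hD3K : D3 K1 = K4 ⊗ₜ K6) (hD3Ki : D3 Ki1 = Ki4 ⊗ₜ Ki6)
    (hD3E : D3 E1 = E4 ⊗ₜ K6 + Ki4 ⊗ₜ E6) (hD3F : D3 F1 = F4 ⊗ₜ K6 + Ki4 ⊗ₜ F6)
    -- Δ_{ρν}^υ
    (D4 : Uρν →ₐ[ℂ] Uρυ ⊗[ℂ] Uυν)
    (hD4K : D4 K6 = K5 ⊗ₜ K3) (hD4Ki : D4 Ki6 = Ki5 ⊗ₜ Ki3)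
    (hD4E : D4 E6 = E5 ⊗ₜ K3 + Ki5 ⊗ₜ E3) (hD4F : D4 F6 = F5 ⊗ₜ K3 + Ki5 ⊗ₜ F3) :
    ∀ x : Uμν,
      (Algebra.TensorProduct.assoc ℂ ℂ ℂ Uμρ Uρυ Uυν)
          ((Algebra.TensorProduct.map D2 (AlgHom.id ℂ Uυν)) (D1 x)) =
        (Algebra.TensorProduct.map (AlgHom.id ℂ Uμρ) D4) (D3 x) := by
  have hq : (q : ℂ) ≠ 0 := by exact_mod_cast hq0.ne'
  -- the quadruple in the triple tensor product satisfies the relations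
  have hBC := UqRel.tmul hq h5 h3
  have hABC := UqRel.tmul hq h4 hBC
  obtain ⟨hrel, huniv⟩ := h1
  obtain ⟨f, -, hfu⟩ := huniv _ _ _ _ _ _ _ hABC
  set L : Uμν →ₐ[ℂ] Uμρ ⊗[ℂ] (Uρυ ⊗[ℂ] Uυν) :=
    ((Algebra.TensorProduct.assoc ℂ ℂ ℂ Uμρ Uρυ Uυν).toAlgHom.comp
      ((Algebra.TensorProduct.map D2 (AlgHom.id ℂ Uυν)).comp D1)) with hL
  set R : Uμν →ₐ[ℂ] Uμρ ⊗[ℂ] (Uρυ ⊗[ℂ] Uυν) :=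
    ((Algebra.TensorProduct.map (AlgHom.id ℂ Uμρ) D4).comp D3) with hR
  have hLf : L = f := by
    apply hfu
    refine ⟨?_, ?_, ?_, ?_⟩ <;>
      simp [hL, hD1K, hD1Ki, hD1E, hD1F, hD2K, hD2Ki, hD2E, hD2F,
        Algebra.TensorProduct.map_tmul, Algebra.TensorProduct.assoc_tmul,
        add_tmul, tmul_add, add_assoc]
  have hRf : R = f := by
    apply hfu
    refine ⟨?_, ?_, ?_, ?_⟩ <;>
      simp [hR, hD3K, hD3Ki, hD3E, hD3F, hD4K, hD4Ki, hD4E, hD4F,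
        Algebra.TensorProduct.map_tmul, add_tmul, tmul_add, add_assoc]
  intro x
  have := congrArg (fun g : Uμν →ₐ[ℂ] Uμρ ⊗[ℂ] (Uρυ ⊗[ℂ] Uυν) => g x) (hLf.trans hRf.symm)
  simpa [hL, hR] using this
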